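/- Let d ≥ 2, m, n_1,…,n_d be positive integers, r = (r_1,…,r_d) a tuple of positive integers, and a ∈ (0,1). Let A : ℝ^{n_1×⋯×n_d} → ℝ^m be a linear map satisfying the HOSVD-TRIP at rank 3r = (3r_1,…,3r_d) with constant δ ≤ a/(a+8), and set ε = a²(1−δ)²/(17·(1−δ+√(1+δ)·‖A‖_{2→2})²) and b = 2√(1+δ)/(1−δ) + √(4ε+2ε²)·‖A‖_{2→2}/(1−δ). Let X and X' be tensors of HOSVD-rank at most r, let e ∈ ℝ^m, let μ satisfy 1/(1+δ) ≤ μ ≤ 1/(1−δ), and set Y = X' + μ·A*(A(X) + e − A(X')). If X'' is a tensor of HOSVD-rank at most r satisfying ‖Y − X''‖_F ≤ (1+ε)·‖Y − X‖_F, then ‖X'' − X‖_F ≤ a·‖X' − X‖_F + b·‖e‖_2. -/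

import Mathlib

open scoped BigOperators

noncomputable section

/-- The mode-`k` unfolding of an order-`d` tensor, with columns indexed (redundantly)
by full multi-indices: entry `(a, j)` is `X` evaluated at `j` with its `k`-th index
replaced by `a`.  Its rank coincides with the rank of the usual mode-`k` unfolding. -/
def unfold {d : ℕ} (n : Fin d → ℕ) (k : Fin d) (X : (∀ i, Fin (n i)) → ℝ) :
    Matrix (Fin (n k)) (∀ i, Fin (n i)) ℝ :=
  Matrix.of fun a j => X (Function.update j k a)

/-- `X` has HOSVD-rank at most `r`: every mode-`k` unfolding has matrix rank at most `r k`. -/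
def hosvdRankLE {d : ℕ} (n r : Fin d → ℕ) (X : EuclideanSpace ℝ (∀ i, Fin (n i))) : Prop :=
  ∀ k, (unfold n k (fun j => X j)).rank ≤ r k

open scoped RealInnerProductSpace

lemma matrix_rank_add_le {m' n' : Type*} [Fintype m'] [Fintype n'] (A B : Matrix m' n' ℝ) :
    (A + B).rank ≤ A.rank + B.rank := by
  classical
  rw [Matrix.rank, Matrix.rank, Matrix.rank, Matrix.mulVecLin_add]
  have h : LinearMap.range (A.mulVecLin + B.mulVecLin)
      ≤ LinearMap.range A.mulVecLin ⊔ LinearMap.range B.mulVecLin := by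
    rintro x ⟨v, rfl⟩
    exact Submodule.mem_sup.2 ⟨A.mulVecLin v, ⟨v, rfl⟩, B.mulVecLin v, ⟨v, rfl⟩, rfl⟩
  exact le_trans (Submodule.finrank_mono h)
    (Submodule.finrank_add_le_finrank_add_finrank _ _)

lemma matrix_rank_smul_le {m' n' : Type*} [Fintype m'] [Fintype n'] (c : ℝ) (A : Matrix m' n' ℝ) :
    (c • A).rank ≤ A.rank := by
  classical
  rw [Matrix.rank, Matrix.rank]
  have h : LinearMap.range (c • A).mulVecLin ≤ LinearMap.range A.mulVecLin := by
    rintro x ⟨v, rfl⟩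
    exact ⟨c • v, by simp [Matrix.mulVecLin_apply, Matrix.smul_mulVec, Matrix.mulVec_smul]⟩
  exact Submodule.finrank_mono h

lemma hosvd_comb {d : ℕ} {n r : Fin d → ℕ} {P Q R : EuclideanSpace ℝ (∀ i, Fin (n i))}
    (hP : hosvdRankLE n r P) (hQ : hosvdRankLE n r Q) (hR : hosvdRankLE n r R)
    (α β γ : ℝ) : hosvdRankLE n (fun k => 3 * r k) (α • P + β • Q + γ • R) := by
  intro k
  have he : unfold n k (fun j => (α • P + β • Q + γ • R) j)
      = α • unfold n k (fun j => P j) + (β • unfold n k (fun j => Q j)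
        + γ • unfold n k (fun j => R j)) := by
    ext x j
    simp [unfold, PiLp.add_apply, PiLp.smul_apply, smul_eq_mul, Matrix.add_apply,
      Matrix.smul_apply]
    ring
  rw [he]
  calc (α • unfold n k (fun j => P j) + (β • unfold n k (fun j => Q j)
        + γ • unfold n k (fun j => R j))).rank
      ≤ (α • unfold n k (fun j => P j)).rank + (β • unfold n k (fun j => Q j)
        + γ • unfold n k (fun j => R j)).rank := matrix_rank_add_le _ _
    _ ≤ (α • unfold n k (fun j => P j)).rank + ((β • unfold n k (fun j => Q j)).rank
        + (γ • unfold n k (fun j => R j)).rank) := by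
        exact Nat.add_le_add_left (matrix_rank_add_le _ _) _
    _ ≤ r k + (r k + r k) := by
        gcongr
        · exact le_trans (matrix_rank_smul_le _ _) (hP k)
        · exact le_trans (matrix_rank_smul_le _ _) (hQ k)
        · exact le_trans (matrix_rank_smul_le _ _) (hR k)
    _ = 3 * r k := by omega

lemma quad_bound {x p q : ℝ} (hx : 0 ≤ x) (hp : 0 ≤ p) (hq : 0 ≤ q)
    (h : x ^ 2 ≤ p * x + q) : x ≤ p + Real.sqrt q := by
  by_contra hc
  push_neg at hc
  have hs := Real.sqrt_nonneg q
  have hsq : Real.sqrt q ≤ x := by linarith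
  nlinarith [Real.sq_sqrt hq]


lemma polar_real {δ S T p q P Q : ℝ} (hδ0 : 0 ≤ δ) (hδ1 : δ < 1)
    (hp : 0 ≤ p) (hq : 0 ≤ q) (hpq : p + q = 4)
    (hS : 4 * S = p - q) (hT : 4 * T = P - Q)
    (F1 : (1 - δ) * p ≤ (1 + δ) * P) (F2 : (1 - δ) * Q ≤ (1 + δ) * q) :
    S - T ≤ 2 * δ / (1 - δ) := by
  have h1δ : (0:ℝ) < 1 - δ := by linarith
  have h1δ' : (0:ℝ) < 1 + δ := by linarith
  rw [le_div_iff₀ h1δ, ← mul_le_mul_iff_right₀ h1δ']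
  have hS2 : (1 - δ) * ((1 + δ) * (4 * S)) = (1 - δ) * ((1 + δ) * (p - q)) := by rw [hS]
  have hT2 : (1 - δ) * ((1 + δ) * (4 * T)) = (1 - δ) * ((1 + δ) * (P - Q)) := by rw [hT]
  have G1 := mul_le_mul_of_nonneg_left F1 h1δ.le
  have G2 := mul_le_mul_of_nonneg_left F2 h1δ'.le
  have n1 : 0 ≤ δ * p := mul_nonneg hδ0 hp
  have n2 : 0 ≤ δ * q := mul_nonneg hδ0 hq
  have n3 : 0 ≤ δ * (δ * p) := mul_nonneg hδ0 n1
  have n4 : 0 ≤ δ * (δ * q) := mul_nonneg hδ0 n2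
  nlinarith [hS2, hT2, G1, G2]

lemma polar_bound {E F : Type*} [NormedAddCommGroup E] [InnerProductSpace ℝ E]
    [NormedAddCommGroup F] [InnerProductSpace ℝ F]
    (A : E →L[ℝ] F) (δ μ : ℝ) (hδ0 : 0 ≤ δ) (hδ1 : δ < 1)
    (hμ1 : 1 / (1 + δ) ≤ μ) (hμ2 : μ ≤ 1 / (1 - δ))
    (u v : E)
    (hlow : ∀ s t : ℝ, (1 - δ) * ‖s • u + t • v‖ ^ 2 ≤ ‖A (s • u + t • v)‖ ^ 2)
    (hup : ∀ s t : ℝ, ‖A (s • u + t • v)‖ ^ 2 ≤ (1 + δ) * ‖s • u + t • v‖ ^ 2) :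
    ⟪u, v⟫ - μ * ⟪A u, A v⟫ ≤ 2 * δ / (1 - δ) * ‖u‖ * ‖v‖ := by
  have h1δ : (0:ℝ) < 1 - δ := by linarith
  have h1δ' : (0:ℝ) < 1 + δ := by linarith
  have hc0 : 0 ≤ 2 * δ / (1 - δ) := by positivity
  rcases eq_or_ne u 0 with hu | hu
  · simp [hu, hc0]
  rcases eq_or_ne v 0 with hv | hv
  · simp [hv, hc0]
  have hnu : (0:ℝ) < ‖u‖ := norm_pos_iff.mpr hu
  have hnv : (0:ℝ) < ‖v‖ := norm_pos_iff.mpr hv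
  set a' : E := ‖u‖⁻¹ • u with ha'
  set b' : E := ‖v‖⁻¹ • v with hb'
  have hna : ‖a'‖ = 1 := norm_smul_inv_norm hu
  have hnb : ‖b'‖ = 1 := norm_smul_inv_norm hv
  have hw1 : a' + b' = ‖u‖⁻¹ • u + ‖v‖⁻¹ • v := rfl
  have hw2 : a' - b' = ‖u‖⁻¹ • u + (-‖v‖⁻¹) • v := by
    rw [neg_smul]; abel
  have g1 : (1 - δ) * ‖a' + b'‖ ^ 2 ≤ ‖A (a' + b')‖ ^ 2 := by
    rw [hw1]; exact hlow _ _
  have g2 : ‖A (a' - b')‖ ^ 2 ≤ (1 + δ) * ‖a' - b'‖ ^ 2 := by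
    rw [hw2]; exact hup _ _
  have hμ0 : 0 < μ := lt_of_lt_of_le (by positivity) hμ1
  have hμa : 1 ≤ μ * (1 + δ) := by
    rw [div_le_iff₀ h1δ'] at hμ1; linarith
  have hμb : μ * (1 - δ) ≤ 1 := by
    rw [le_div_iff₀ h1δ] at hμ2; linarith
  have e1 := norm_add_sq_real a' b'
  have e2 := norm_sub_sq_real a' b'
  have e3 := norm_add_sq_real (A a') (A b')
  have e4 := norm_sub_sq_real (A a') (A b')
  have hAab : A (a' + b') = A a' + A b' := map_add A a' b'
  have hAab' : A (a' - b') = A a' - A b' := map_sub A a' b'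
  rw [hAab] at g1
  rw [hAab'] at g2
  have hS : 4 * ⟪a', b'⟫ = ‖a' + b'‖ ^ 2 - ‖a' - b'‖ ^ 2 := by
    rw [e1, e2, hna, hnb]; ring
  have hT : 4 * ⟪A a', A b'⟫ = ‖A a' + A b'‖ ^ 2 - ‖A a' - A b'‖ ^ 2 := by
    rw [e3, e4]; ring
  have hpq : ‖a' + b'‖ ^ 2 + ‖a' - b'‖ ^ 2 = 4 := by
    rw [e1, e2, hna, hnb]; ring
  have hPa : (0:ℝ) ≤ ‖A a' + A b'‖ ^ 2 := by positivity
  have hQa : (0:ℝ) ≤ ‖A a' - A b'‖ ^ 2 := by positivity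
  have F1 : (1 - δ) * ‖a' + b'‖ ^ 2 ≤ (1 + δ) * (μ * ‖A a' + A b'‖ ^ 2) := by
    calc (1 - δ) * ‖a' + b'‖ ^ 2 ≤ ‖A a' + A b'‖ ^ 2 := g1
      _ ≤ (μ * (1 + δ)) * ‖A a' + A b'‖ ^ 2 := le_mul_of_one_le_left hPa hμa
      _ = (1 + δ) * (μ * ‖A a' + A b'‖ ^ 2) := by ring
  have F2 : (1 - δ) * (μ * ‖A a' - A b'‖ ^ 2) ≤ (1 + δ) * ‖a' - b'‖ ^ 2 := by
    calc (1 - δ) * (μ * ‖A a' - A b'‖ ^ 2) = (μ * (1 - δ)) * ‖A a' - A b'‖ ^ 2 := by ring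
      _ ≤ 1 * ‖A a' - A b'‖ ^ 2 := mul_le_mul_of_nonneg_right hμb hQa
      _ = ‖A a' - A b'‖ ^ 2 := one_mul _
      _ ≤ (1 + δ) * ‖a' - b'‖ ^ 2 := g2
  have hkey : ⟪a', b'⟫ - μ * ⟪A a', A b'⟫ ≤ 2 * δ / (1 - δ) :=
    polar_real hδ0 hδ1 (by positivity) (by positivity) hpq hS
      (by linear_combination μ * hT) F1 F2
  have hs1 : ⟪a', b'⟫ = ‖u‖⁻¹ * (‖v‖⁻¹ * ⟪u, v⟫) := by
    rw [ha', hb', real_inner_smul_left, real_inner_smul_right]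
  have hs2 : ⟪A a', A b'⟫ = ‖u‖⁻¹ * (‖v‖⁻¹ * ⟪A u, A v⟫) := by
    rw [ha', hb', map_smul, map_smul, real_inner_smul_left, real_inner_smul_right]
  rw [hs1, hs2] at hkey
  have hmul := mul_le_mul_of_nonneg_left hkey (by positivity : (0:ℝ) ≤ ‖u‖ * ‖v‖)
  have huv : ‖u‖ * ‖v‖ * (‖u‖⁻¹ * (‖v‖⁻¹ * ⟪u, v⟫) - μ * (‖u‖⁻¹ * (‖v‖⁻¹ * ⟪A u, A v⟫)))
      = ⟪u, v⟫ - μ * ⟪A u, A v⟫ := by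
    field_simp
  rw [huv] at hmul
  calc ⟪u, v⟫ - μ * ⟪A u, A v⟫ ≤ ‖u‖ * ‖v‖ * (2 * δ / (1 - δ)) := hmul
    _ = 2 * δ / (1 - δ) * ‖u‖ * ‖v‖ := by ring

lemma sqrt_sq_add_sq_le {x y : ℝ} (hx : 0 ≤ x) (hy : 0 ≤ y) :
    Real.sqrt (x ^ 2 + y ^ 2) ≤ x + y := by
  have h := Real.sqrt_le_sqrt (show x ^ 2 + y ^ 2 ≤ (x + y) ^ 2 by nlinarith)
  rwa [Real.sqrt_sq (by linarith)] at h

set_option maxHeartbeats 1000000 in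
theorem normalized_TIHT_one_step
    (d m : ℕ) (hd : 2 ≤ d) (hm : 0 < m) (n r : Fin d → ℕ)
    (hn : ∀ i, 0 < n i) (hr : ∀ i, 0 < r i)
    (a : ℝ) (ha : a ∈ Set.Ioo (0 : ℝ) 1)
    (A : EuclideanSpace ℝ (∀ i, Fin (n i)) →L[ℝ] EuclideanSpace ℝ (Fin m))
    (δ : ℝ) (hδ0 : 0 ≤ δ) (hδa : δ ≤ a / (a + 8))
    (hTRIP : ∀ Z : EuclideanSpace ℝ (∀ i, Fin (n i)),
      hosvdRankLE n (fun k => 3 * r k) Z →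
        (1 - δ) * ‖Z‖ ^ 2 ≤ ‖A Z‖ ^ 2 ∧ ‖A Z‖ ^ 2 ≤ (1 + δ) * ‖Z‖ ^ 2)
    (ε b : ℝ)
    (hε : ε = a ^ 2 * (1 - δ) ^ 2 / (17 * (1 - δ + Real.sqrt (1 + δ) * ‖A‖) ^ 2))
    (hb : b = 2 * Real.sqrt (1 + δ) / (1 - δ)
      + Real.sqrt (4 * ε + 2 * ε ^ 2) * ‖A‖ / (1 - δ))
    (X X' : EuclideanSpace ℝ (∀ i, Fin (n i)))
    (hX : hosvdRankLE n r X) (hX' : hosvdRankLE n r X')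
    (e : EuclideanSpace ℝ (Fin m))
    (μ : ℝ) (hμ1 : 1 / (1 + δ) ≤ μ) (hμ2 : μ ≤ 1 / (1 - δ))
    (Y : EuclideanSpace ℝ (∀ i, Fin (n i)))
    (hY : Y = X' + μ • (ContinuousLinearMap.adjoint A) (A X + e - A X'))
    (X'' : EuclideanSpace ℝ (∀ i, Fin (n i))) (hX'' : hosvdRankLE n r X'')
    (hthr : ‖Y - X''‖ ≤ (1 + ε) * ‖Y - X‖) :
    ‖X'' - X‖ ≤ a * ‖X' - X‖ + b * ‖e‖ := by
  obtain ⟨ha0, ha1⟩ := ha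
  have hδ1 : δ < 1 := by
    have h8 : (0:ℝ) < a + 8 := by linarith
    have : a / (a + 8) < 1 := by rw [div_lt_one h8]; linarith
    linarith
  have h1δ : (0:ℝ) < 1 - δ := by linarith
  have h1δ' : (0:ℝ) < 1 + δ := by linarith
  have hμ0 : 0 < μ := lt_of_lt_of_le (by positivity) hμ1
  set K : ℝ := 1 - δ + Real.sqrt (1 + δ) * ‖A‖ with hK_def
  have hK0 : 0 < K := by
    have : 0 ≤ Real.sqrt (1 + δ) * ‖A‖ := by positivity
    rw [hK_def]; linarith
  have hε0 : 0 ≤ ε := by rw [hε]; positivity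
  set u : EuclideanSpace ℝ (∀ i, Fin (n i)) := X'' - X with hu_def
  set v : EuclideanSpace ℝ (∀ i, Fin (n i)) := X' - X with hv_def
  -- rank facts
  have hcomb : ∀ s t : ℝ, hosvdRankLE n (fun k => 3 * r k) (s • u + t • v) := by
    intro s t
    have h : s • u + t • v = s • X'' + t • X' + (-(s + t)) • X := by
      rw [hu_def, hv_def]; module
    rw [h]
    exact hosvd_comb hX'' hX' hX s t _
  have hu3 : hosvdRankLE n (fun k => 3 * r k) u := by
    have h := hcomb 1 0; simpa using h
  have hv3 : hosvdRankLE n (fun k => 3 * r k) v := by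
    have h := hcomb 0 1; simpa using h
  -- operator norm bound on rank-3r tensors
  have hAub : ∀ Z : EuclideanSpace ℝ (∀ i, Fin (n i)), hosvdRankLE n (fun k => 3 * r k) Z →
      ‖A Z‖ ≤ Real.sqrt (1 + δ) * ‖Z‖ := by
    intro Z hZ
    have h2 := (hTRIP Z hZ).2
    have hsq : ‖A Z‖ ^ 2 ≤ (Real.sqrt (1 + δ) * ‖Z‖) ^ 2 := by
      rw [mul_pow, Real.sq_sqrt h1δ'.le]; exact h2
    have h := Real.sqrt_le_sqrt hsq
    rwa [Real.sqrt_sq (norm_nonneg _), Real.sqrt_sq (by positivity)] at h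
  -- key polarization bound
  have hkey : ⟪v, u⟫ - μ * ⟪A v, A u⟫ ≤ 2 * δ / (1 - δ) * ‖v‖ * ‖u‖ := by
    apply polar_bound A δ μ hδ0 hδ1 hμ1 hμ2 v u
    · intro s t
      have h := hcomb t s
      rw [add_comm (t • u) (s • v)] at h
      exact (hTRIP _ h).1
    · intro s t
      have h := hcomb t s
      rw [add_comm (t • u) (s • v)] at h
      exact (hTRIP _ h).2
  -- threshold squared
  have hthr2 : ‖Y - X''‖ ^ 2 ≤ (1 + ε) ^ 2 * ‖Y - X‖ ^ 2 := by
    calc ‖Y - X''‖ ^ 2 ≤ ((1 + ε) * ‖Y - X‖) ^ 2 := pow_le_pow_left₀ (norm_nonneg _) hthr 2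
      _ = (1 + ε) ^ 2 * ‖Y - X‖ ^ 2 := mul_pow _ _ 2
  have hexp : ‖Y - X''‖ ^ 2 = ‖Y - X‖ ^ 2 - 2 * ⟪Y - X, u⟫ + ‖u‖ ^ 2 := by
    have h : Y - X'' = (Y - X) - u := by rw [hu_def]; abel
    rw [h, norm_sub_sq_real]
  have hu2 : ‖u‖ ^ 2 ≤ 2 * ⟪Y - X, u⟫ + (2 * ε + ε ^ 2) * ‖Y - X‖ ^ 2 := by
    linarith [hexp, hthr2]
  -- rewrite Y - X
  have hYX : Y - X = v + μ • (ContinuousLinearMap.adjoint A) (e - A v) := by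
    rw [hY, hv_def]
    have h : A X + e - A X' = e - A (X' - X) := by rw [map_sub]; abel
    rw [h]; abel
  have hIP : ⟪Y - X, u⟫ = ⟪v, u⟫ + μ * (⟪e, A u⟫ - ⟪A v, A u⟫) := by
    rw [hYX, inner_add_left, real_inner_smul_left,
      ContinuousLinearMap.adjoint_inner_left, inner_sub_left, inner_sub_left]
  -- noise inner product bound
  have hAu : ‖A u‖ ≤ Real.sqrt (1 + δ) * ‖u‖ := hAub u hu3
  have hAv : ‖A v‖ ≤ Real.sqrt (1 + δ) * ‖v‖ := hAub v hv3
  have B2 : μ * ⟪e, A u⟫ ≤ Real.sqrt (1 + δ) / (1 - δ) * ‖e‖ * ‖u‖ := by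
    have h1 : ⟪e, A u⟫ ≤ ‖e‖ * (Real.sqrt (1 + δ) * ‖u‖) := by
      calc ⟪e, A u⟫ ≤ ‖e‖ * ‖A u‖ := real_inner_le_norm e (A u)
        _ ≤ ‖e‖ * (Real.sqrt (1 + δ) * ‖u‖) := by gcongr
    calc μ * ⟪e, A u⟫ ≤ μ * (‖e‖ * (Real.sqrt (1 + δ) * ‖u‖)) := by
          exact mul_le_mul_of_nonneg_left h1 hμ0.le
      _ ≤ (1 / (1 - δ)) * (‖e‖ * (Real.sqrt (1 + δ) * ‖u‖)) := by
          apply mul_le_mul_of_nonneg_right hμ2; positivity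
      _ = Real.sqrt (1 + δ) / (1 - δ) * ‖e‖ * ‖u‖ := by ring
  -- adjoint norm
  have hadj : ‖(ContinuousLinearMap.adjoint A :
      EuclideanSpace ℝ (Fin m) →L[ℝ] EuclideanSpace ℝ (∀ i, Fin (n i)))‖ = ‖A‖ :=
    LinearIsometryEquiv.norm_map ContinuousLinearMap.adjoint A
  -- residual norm bound
  have B3 : ‖Y - X‖ ≤ (K * ‖v‖ + ‖A‖ * ‖e‖) / (1 - δ) := by
    have h3 : ‖(ContinuousLinearMap.adjoint A) (e - A v)‖
        ≤ ‖A‖ * (‖e‖ + Real.sqrt (1 + δ) * ‖v‖) := by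
      calc ‖(ContinuousLinearMap.adjoint A) (e - A v)‖
          ≤ ‖(ContinuousLinearMap.adjoint A :
              EuclideanSpace ℝ (Fin m) →L[ℝ] EuclideanSpace ℝ (∀ i, Fin (n i)))‖ * ‖e - A v‖ :=
            ContinuousLinearMap.le_opNorm _ _
        _ = ‖A‖ * ‖e - A v‖ := by rw [hadj]
        _ ≤ ‖A‖ * (‖e‖ + ‖A v‖) := by gcongr; exact norm_sub_le _ _
        _ ≤ ‖A‖ * (‖e‖ + Real.sqrt (1 + δ) * ‖v‖) := by gcongr
    have step1 : ‖Y - X‖ ≤ ‖v‖ + μ * (‖A‖ * (‖e‖ + Real.sqrt (1 + δ) * ‖v‖)) := by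
      rw [hYX]
      refine le_trans (norm_add_le _ _) ?_
      have h2 : ‖μ • (ContinuousLinearMap.adjoint A) (e - A v)‖
          = μ * ‖(ContinuousLinearMap.adjoint A) (e - A v)‖ := by
        rw [norm_smul, Real.norm_of_nonneg hμ0.le]
      rw [h2]
      have := mul_le_mul_of_nonneg_left h3 hμ0.le
      linarith
    have step2 : μ * (‖A‖ * (‖e‖ + Real.sqrt (1 + δ) * ‖v‖))
        ≤ (1 / (1 - δ)) * (‖A‖ * (‖e‖ + Real.sqrt (1 + δ) * ‖v‖)) := by
      apply mul_le_mul_of_nonneg_right hμ2; positivity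
    have heq : ‖v‖ + (1 / (1 - δ)) * (‖A‖ * (‖e‖ + Real.sqrt (1 + δ) * ‖v‖))
        = (K * ‖v‖ + ‖A‖ * ‖e‖) / (1 - δ) + δ * ‖v‖ / (1 - δ) - δ * ‖v‖ / (1 - δ) := by
      rw [hK_def]; field_simp; ring
    calc ‖Y - X‖ ≤ ‖v‖ + μ * (‖A‖ * (‖e‖ + Real.sqrt (1 + δ) * ‖v‖)) := step1
      _ ≤ ‖v‖ + (1 / (1 - δ)) * (‖A‖ * (‖e‖ + Real.sqrt (1 + δ) * ‖v‖)) := by linarith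
      _ = (K * ‖v‖ + ‖A‖ * ‖e‖) / (1 - δ) := by rw [hK_def]; field_simp; ring
  have hRHS0 : 0 ≤ (K * ‖v‖ + ‖A‖ * ‖e‖) / (1 - δ) := by positivity
  have hYX2 : ‖Y - X‖ ^ 2
      ≤ 2 * (K * ‖v‖ / (1 - δ)) ^ 2 + 2 * (‖A‖ * ‖e‖ / (1 - δ)) ^ 2 := by
    have hsq : ‖Y - X‖ ^ 2 ≤ ((K * ‖v‖ + ‖A‖ * ‖e‖) / (1 - δ)) ^ 2 :=
      pow_le_pow_left₀ (norm_nonneg _) B3 2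
    have h2 : ((K * ‖v‖ + ‖A‖ * ‖e‖) / (1 - δ)) ^ 2
        ≤ 2 * (K * ‖v‖ / (1 - δ)) ^ 2 + 2 * (‖A‖ * ‖e‖ / (1 - δ)) ^ 2 := by
      have := sq_nonneg (K * ‖v‖ / (1 - δ) - ‖A‖ * ‖e‖ / (1 - δ))
      have hexp2 : ((K * ‖v‖ + ‖A‖ * ‖e‖) / (1 - δ)) ^ 2
          = (K * ‖v‖ / (1 - δ) + ‖A‖ * ‖e‖ / (1 - δ)) ^ 2 := by ring
      nlinarith [sq_nonneg (K * ‖v‖ / (1 - δ) - ‖A‖ * ‖e‖ / (1 - δ))]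
    linarith
  -- master quadratic inequality
  set P : ℝ := 2 * (2 * δ / (1 - δ)) * ‖v‖ + 2 * Real.sqrt (1 + δ) / (1 - δ) * ‖e‖ with hP_def
  set Q : ℝ := (4 * ε + 2 * ε ^ 2) * ((K * ‖v‖ / (1 - δ)) ^ 2 + (‖A‖ * ‖e‖ / (1 - δ)) ^ 2)
    with hQ_def
  have hquad : ‖u‖ ^ 2 ≤ P * ‖u‖ + Q := by
    have hmul := mul_le_mul_of_nonneg_left hYX2
      (by positivity : (0:ℝ) ≤ 2 * ε + ε ^ 2)
    rw [hIP] at hu2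
    rw [hP_def, hQ_def]
    have key : ‖u‖ ^ 2 ≤ 2 * (2 * δ / (1 - δ)) * ‖v‖ * ‖u‖
        + 2 * (Real.sqrt (1 + δ) / (1 - δ)) * ‖e‖ * ‖u‖
        + (4 * ε + 2 * ε ^ 2) * ((K * ‖v‖ / (1 - δ)) ^ 2 + (‖A‖ * ‖e‖ / (1 - δ)) ^ 2) := by
      linarith [hkey, B2, hu2, hmul]
    calc ‖u‖ ^ 2 ≤ 2 * (2 * δ / (1 - δ)) * ‖v‖ * ‖u‖
        + 2 * (Real.sqrt (1 + δ) / (1 - δ)) * ‖e‖ * ‖u‖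
        + (4 * ε + 2 * ε ^ 2) * ((K * ‖v‖ / (1 - δ)) ^ 2 + (‖A‖ * ‖e‖ / (1 - δ)) ^ 2) := key
      _ = (2 * (2 * δ / (1 - δ)) * ‖v‖ + 2 * Real.sqrt (1 + δ) / (1 - δ) * ‖e‖) * ‖u‖
        + (4 * ε + 2 * ε ^ 2) * ((K * ‖v‖ / (1 - δ)) ^ 2 + (‖A‖ * ‖e‖ / (1 - δ)) ^ 2) := by
        ring
  have hP0 : 0 ≤ P := by rw [hP_def]; positivity
  have hQ0 : 0 ≤ Q := by rw [hQ_def]; positivity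
  have hub : ‖u‖ ≤ P + Real.sqrt Q := quad_bound (norm_nonneg u) hP0 hQ0 hquad
  -- bound sqrt Q
  have hsQ : Real.sqrt Q ≤ Real.sqrt (4 * ε + 2 * ε ^ 2)
      * (K * ‖v‖ / (1 - δ) + ‖A‖ * ‖e‖ / (1 - δ)) := by
    rw [hQ_def, Real.sqrt_mul (by positivity)]
    gcongr
    exact sqrt_sq_add_sq_le (by positivity) (by positivity)
  -- coefficient bounds
  have hδa' : δ * (a + 8) ≤ a := by
    rw [le_div_iff₀ (by linarith : (0:ℝ) < a + 8)] at hδa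
    linarith
  have hc_half : 2 * (2 * δ / (1 - δ)) ≤ a / 2 := by
    rw [show 2 * (2 * δ / (1 - δ)) = 4 * δ / (1 - δ) by ring, div_le_iff₀ h1δ]
    nlinarith [hδa']
  have hε17 : ε ≤ 1 / 17 := by
    have hKsq : (1 - δ) ^ 2 ≤ K ^ 2 := by
      apply pow_le_pow_left₀ h1δ.le
      rw [hK_def]
      have : 0 ≤ Real.sqrt (1 + δ) * ‖A‖ := by positivity
      linarith
    have ha2 : a ^ 2 ≤ 1 := by rw [sq]; exact mul_le_one₀ ha1.le ha0.le ha1.le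
    have hprod : a ^ 2 * (1 - δ) ^ 2 ≤ 1 * K ^ 2 :=
      mul_le_mul ha2 hKsq (sq_nonneg _) zero_le_one
    rw [hε, div_le_div_iff₀ (by positivity) (by norm_num : (0:ℝ) < 17)]
    linarith
  have hsq_half : Real.sqrt (4 * ε + 2 * ε ^ 2) * K / (1 - δ) ≤ a / 2 := by
    have h42 : 4 * ε + 2 * ε ^ 2 ≤ (a * (1 - δ) / (2 * K)) ^ 2 := by
      have hes : ε * ε ≤ (1 / 17) * ε := mul_le_mul_of_nonneg_right hε17 hε0
      have h174 : 4 * ε + 2 * ε ^ 2 ≤ (17 / 4) * ε := by linarith [hes, hε0]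
      have heq2 : (17 / 4) * ε = (a * (1 - δ) / (2 * K)) ^ 2 := by
        rw [hε]; field_simp; ring
      linarith
    have hsq2 : Real.sqrt (4 * ε + 2 * ε ^ 2) ≤ a * (1 - δ) / (2 * K) := by
      have h := Real.sqrt_le_sqrt h42
      rwa [Real.sqrt_sq (by positivity)] at h
    calc Real.sqrt (4 * ε + 2 * ε ^ 2) * K / (1 - δ)
        ≤ (a * (1 - δ) / (2 * K)) * K / (1 - δ) := by gcongr
      _ = a / 2 := by field_simp
  -- final assembly
  have hfin : ‖u‖ ≤ (2 * (2 * δ / (1 - δ)) + Real.sqrt (4 * ε + 2 * ε ^ 2) * K / (1 - δ)) * ‖v‖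
      + b * ‖e‖ := by
    rw [hb]
    calc ‖u‖ ≤ P + Real.sqrt Q := hub
      _ ≤ P + Real.sqrt (4 * ε + 2 * ε ^ 2)
          * (K * ‖v‖ / (1 - δ) + ‖A‖ * ‖e‖ / (1 - δ)) := by linarith
      _ = (2 * (2 * δ / (1 - δ)) + Real.sqrt (4 * ε + 2 * ε ^ 2) * K / (1 - δ)) * ‖v‖
          + (2 * Real.sqrt (1 + δ) / (1 - δ)
            + Real.sqrt (4 * ε + 2 * ε ^ 2) * ‖A‖ / (1 - δ)) * ‖e‖ := by
        rw [hP_def]; ring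
  calc ‖u‖ ≤ (2 * (2 * δ / (1 - δ)) + Real.sqrt (4 * ε + 2 * ε ^ 2) * K / (1 - δ)) * ‖v‖
      + b * ‖e‖ := hfin
    _ ≤ a * ‖v‖ + b * ‖e‖ := by
      have hcoef : 2 * (2 * δ / (1 - δ)) + Real.sqrt (4 * ε + 2 * ε ^ 2) * K / (1 - δ) ≤ a := by
        linarith
      have := mul_le_mul_of_nonneg_right hcoef (norm_nonneg v)
      linarith
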